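/- Let Δ ≥ 3 be an integer and k ≥ e·Δ + 1 a real number. Then there exists ε ∈ (0,1) such that with K = 1/Δ, for each d = 0,…,Δ−1 with b = Δ−d, one has 0 < (1+ε)²/((k−b)(1−K)^d − εb) ≤ K, and additionally arcsin(K) ≤ π/(3(Δ−1+ε)). -/

import Mathlib

lemma aux_cubic (t : ℝ) (ht : 0 < t) (ht2 : t ≤ 1/2) :
    1 + t ≤ Real.exp (t - t^2/2 + t^3/3) := by
  set u := t - t^2/2 + t^3/3 with hu_def
  have hu : 0 ≤ u := by
    rw [hu_def]
    nlinarith [mul_le_mul_of_nonneg_left ht2 ht.le, pow_nonneg ht.le 3]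
  have h := Real.sum_le_exp_of_nonneg hu 4
  rw [Finset.sum_range_succ, Finset.sum_range_succ, Finset.sum_range_succ,
    Finset.sum_range_one] at h
  norm_num [Nat.factorial] at h
  have hpoly : 1 + t ≤ 1 + u + u^2/2 + u^3/6 := by
    rw [hu_def]
    nlinarith [pow_nonneg ht.le 4, pow_nonneg ht.le 5, pow_nonneg ht.le 6,
      pow_nonneg ht.le 7, pow_nonneg ht.le 8, pow_nonneg ht.le 9, sq_nonneg t]
  linarith

lemma key2 (Δ : ℕ) (hΔ : 3 ≤ Δ) :
    1 + 1/(2*(Δ:ℝ)) ≤ Real.exp 1 * (1 - 1/(Δ:ℝ))^(Δ-1) := by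
  set N := (Δ:ℝ) with hNdef
  have hN : (3:ℝ) ≤ N := by rw [hNdef]; exact_mod_cast hΔ
  have hN1 : (0:ℝ) < N - 1 := by linarith
  set t := 1/(N-1) with htdef
  have ht : 0 < t := by positivity
  have ht2 : t ≤ 1/2 := by
    rw [htdef, div_le_div_iff₀ hN1 (by norm_num)]; linarith
  have h1 := aux_cubic t ht ht2
  have hbase : Real.exp (-(t - t^2/2 + t^3/3)) ≤ 1 - 1/N := by
    rw [Real.exp_neg]
    have heq : 1 - 1/N = (1+t)⁻¹ := by
      rw [htdef]; field_simp; ring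
    rw [heq]
    exact inv_anti₀ (by linarith) h1
  have hpow : (Real.exp (-(t - t^2/2 + t^3/3)))^(Δ-1) ≤ (1 - 1/N)^(Δ-1) :=
    pow_le_pow_left₀ (Real.exp_pos _).le hbase _
  rw [← Real.exp_nat_mul] at hpow
  have hcast : ((Δ-1 : ℕ):ℝ) = N - 1 := by
    have : (1:ℕ) ≤ Δ := by omega
    push_cast [Nat.cast_sub this]; ring
  have hmul : ((Δ-1 : ℕ):ℝ) * (-(t - t^2/2 + t^3/3)) = -1 + (t/2 - t^2/3) := by
    rw [hcast, htdef]; field_simp; ring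
  rw [hmul, Real.exp_add] at hpow
  have h2 : 1 + (t/2 - t^2/3) ≤ Real.exp (t/2 - t^2/3) := by
    linarith [Real.add_one_le_exp (t/2 - t^2/3)]
  have hE : 0 < Real.exp 1 := Real.exp_pos _
  have hEneg : Real.exp (-1) * Real.exp 1 = 1 := by
    rw [← Real.exp_add]; norm_num
  have hstep : Real.exp (-1) * (1 + (t/2 - t^2/3)) ≤ (1 - 1/N)^(Δ-1) := by
    calc Real.exp (-1) * (1 + (t/2 - t^2/3))
        ≤ Real.exp (-1) * Real.exp (t/2 - t^2/3) := by
          exact mul_le_mul_of_nonneg_left h2 (Real.exp_pos _).le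
      _ ≤ (1 - 1/N)^(Δ-1) := hpow
  have hfinal : 1 + (t/2 - t^2/3) ≤ Real.exp 1 * (1 - 1/N)^(Δ-1) := by
    have := mul_le_mul_of_nonneg_left hstep hE.le
    calc 1 + (t/2 - t^2/3)
        = Real.exp 1 * (Real.exp (-1) * (1 + (t/2 - t^2/3))) := by
          rw [← mul_assoc, mul_comm (Real.exp 1), hEneg, one_mul]
      _ ≤ Real.exp 1 * (1 - 1/N)^(Δ-1) := this
  have hts : 1/(2*N) ≤ t/2 - t^2/3 := by
    have hN0 : (0:ℝ) < N := by linarith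
    have heq : t/2 - t^2/3 - 1/(2*N) = (N-3)/(6*N*(N-1)^2) := by
      rw [htdef]; field_simp; ring
    have hpos : 0 ≤ (N-3)/(6*N*(N-1)^2) := div_nonneg (by linarith) (by positivity)
    linarith
  linarith

set_option maxHeartbeats 1000000 in
theorem exists_epsilon (Δ : ℕ) (hΔ : 3 ≤ Δ) (k : ℝ) (hk : Real.exp 1 * Δ + 1 ≤ k) :
    ∃ ε : ℝ, 0 < ε ∧ ε < 1 ∧
      (∀ d : ℕ, d < Δ →
        0 < (1 + ε) ^ 2 / ((k - ((Δ : ℝ) - d)) * (1 - 1 / (Δ : ℝ)) ^ d - ε * ((Δ : ℝ) - d)) ∧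
        (1 + ε) ^ 2 / ((k - ((Δ : ℝ) - d)) * (1 - 1 / (Δ : ℝ)) ^ d - ε * ((Δ : ℝ) - d))
          ≤ 1 / (Δ : ℝ)) ∧
      Real.arcsin (1 / (Δ : ℝ)) ≤ Real.pi / (3 * ((Δ : ℝ) - 1 + ε)) := by
  have hN : (3:ℝ) ≤ (Δ:ℝ) := by exact_mod_cast hΔ
  set N := (Δ:ℝ) with hNdef
  have hN0 : (0:ℝ) < N := by linarith
  have hE : (2.7182818283:ℝ) < Real.exp 1 := Real.exp_one_gt_d9
  refine ⟨1/(8*N), by positivity, by rw [div_lt_one (by linarith)]; linarith, ?_, ?_⟩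
  · intro d hd
    set ε := 1/(8*N) with hε
    have hεN : ε * N = 1/8 := by rw [hε]; field_simp
    have hεpos : 0 < ε := by positivity
    have hε3 : ε ≤ 1/24 := by
      rw [hε, div_le_div_iff₀ (by linarith) (by norm_num)]; linarith
    have hd' : (d:ℝ) ≤ N - 1 := by
      have : (d:ℝ) + 1 ≤ (Δ:ℝ) := by exact_mod_cast hd
      rw [hNdef]; linarith
    have hdnn : (0:ℝ) ≤ (d:ℝ) := Nat.cast_nonneg d
    have hx0 : (0:ℝ) < 1 - 1/N := by
      rw [sub_pos, div_lt_one hN0]; linarith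
    obtain ⟨m, hm⟩ : ∃ m : ℕ, Δ - 1 = d + m := ⟨Δ - 1 - d, by omega⟩
    have hmcast : (m:ℝ) = N - 1 - d := by
      have h1 : (Δ:ℝ) - 1 = ((Δ - 1 : ℕ):ℝ) := by
        have : (1:ℕ) ≤ Δ := by omega
        push_cast [Nat.cast_sub this]; ring
      have h2 : ((Δ - 1 : ℕ):ℝ) = (d:ℝ) + (m:ℝ) := by exact_mod_cast hm
      rw [hNdef]; linarith
    have hk2 : 2 * N + 1 ≤ k := by nlinarith
    have hmN : (m:ℝ) ≤ N - 1 := by rw [hmcast]; linarith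
    have hbern : (1:ℝ) + m * (1/N) ≤ (1 + 1/N)^m := by
      refine one_add_mul_le_pow ?_ m
      have : (0:ℝ) ≤ 1/N := by positivity
      linarith
    have hmix : (1 - 1/N)^m * (1 + 1/N)^m ≤ 1 := by
      rw [← mul_pow]
      have h1 : (1 - 1/N) * (1 + 1/N) = 1 - (1/N)^2 := by ring
      rw [h1]
      have h1N : (0:ℝ) < 1/N := by positivity
      have hinv : 1/N ≤ 1/3 := by rw [div_le_div_iff₀ hN0 (by norm_num)]; linarith
      have hsq : (1/N)*(1/N) ≤ (1/3)*(1/3) := mul_le_mul hinv hinv h1N.le (by norm_num)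
      exact pow_le_one₀ (by nlinarith) (by nlinarith)
    have hBp : (0:ℝ) < 1 + m * (1/N) := by positivity
    have hsmall : (1 - 1/N)^m ≤ 1 / (1 + m * (1/N)) := by
      rw [le_div_iff₀ hBp]
      calc (1 - 1/N)^m * (1 + m * (1/N)) ≤ (1 - 1/N)^m * (1 + 1/N)^m :=
            mul_le_mul_of_nonneg_left hbern (pow_nonneg hx0.le m)
        _ ≤ 1 := hmix
    have hk1 : (0:ℝ) < k - 1 := by nlinarith
    have hA1 : (k - 1) * (1 - 1/N)^m ≤ k - (N - d) := by
      have h1 : (k - 1) * (1 - 1/N)^m ≤ (k - 1) * (1 / (1 + m * (1/N))) :=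
        mul_le_mul_of_nonneg_left hsmall hk1.le
      have h2 : (k - 1) * (1 / (1 + m * (1/N))) ≤ k - (N - d) := by
        rw [mul_one_div, div_le_iff₀ hBp]
        have key : (k - 1) * N ≤ (k - (N - d)) * (N + m) := by
          have hNd : N - (d:ℝ) = m + 1 := by rw [hmcast]; ring
          rw [hNd]
          nlinarith [mul_nonneg (Nat.cast_nonneg m : (0:ℝ) ≤ (m:ℝ))
            (show (0:ℝ) ≤ k - 1 - N - m by linarith)]
        have hfac : (1:ℝ) + m * (1/N) = (N + m)/N := by field_simp
        rw [hfac, ← mul_div_assoc, le_div_iff₀ hN0]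
        linarith [key]
      linarith
    have hpd : (0:ℝ) < (1 - 1/N)^d := pow_pos hx0 d
    have hA : N + 1/2 ≤ (k - (N - d)) * (1 - 1/N)^d := by
      have hkey := key2 Δ hΔ
      have hpD : (0:ℝ) < (1 - 1/N)^(Δ-1) := pow_pos hx0 _
      have hkeN : Real.exp 1 * N ≤ k - 1 := by nlinarith
      have h2 : N * (1 + 1/(2*N)) ≤ (k-1) * (1 - 1/N)^(Δ-1) := by
        calc N * (1 + 1/(2*N)) ≤ N * (Real.exp 1 * (1 - 1/N)^(Δ-1)) :=
              mul_le_mul_of_nonneg_left hkey hN0.le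
          _ = (Real.exp 1 * N) * (1 - 1/N)^(Δ-1) := by ring
          _ ≤ (k-1) * (1 - 1/N)^(Δ-1) := mul_le_mul_of_nonneg_right hkeN hpD.le
      have h3 : N * (1 + 1/(2*N)) = N + 1/2 := by
        have hN' : N ≠ 0 := ne_of_gt hN0
        field_simp
      have h4 : (k - 1) * (1 - 1/N)^(Δ-1) ≤ (k - (N - d)) * (1 - 1/N)^d := by
        rw [hm, pow_add]
        calc (k-1) * ((1 - 1/N)^d * (1 - 1/N)^m)
            = ((k-1) * (1 - 1/N)^m) * (1 - 1/N)^d := by ring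
          _ ≤ (k - (N - d)) * (1 - 1/N)^d := mul_le_mul_of_nonneg_right hA1 hpd.le
      linarith
    have hεb : ε * (N - d) ≤ 1/8 := by nlinarith
    have hNe2 : N * ε^2 = ε/8 := by linear_combination ε * hεN
    have hsum : N * (1 + ε)^2 + ε * (N - d) ≤ N + 1/2 := by nlinarith
    have hDpos : (0:ℝ) < (k - (N - d)) * (1 - 1/N)^d - ε * (N - d) := by
      have h5 : (0:ℝ) < N * (1 + ε)^2 := by positivity
      linarith
    refine ⟨div_pos (by positivity) hDpos, ?_⟩
    rw [div_le_div_iff₀ hDpos hN0]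
    nlinarith
  · set ε := 1/(8*N) with hε
    have hεpos : 0 < ε := by positivity
    have hε1 : ε < 1 := by rw [hε, div_lt_one (by linarith)]; linarith
    have hpi := Real.pi_gt_d6
    have hpi2 := Real.pi_lt_d2
    have hden : (0:ℝ) < N - 1 + ε := by linarith
    set y := Real.pi / (3 * (N - 1 + ε)) with hy
    have hy0 : 0 < y := by positivity
    have hy6 : y ≤ Real.pi / 6 := by
      rw [hy, div_le_div_iff₀ (by positivity) (by norm_num)]
      nlinarith [Real.pi_pos]
    have hy1 : y ≤ 1 := by linarith
    set a := Real.pi / (3 * N) with ha_def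
    have ha : 0 < a := by positivity
    have hylb : a ≤ y := by
      rw [ha_def, hy, div_le_div_iff₀ (by positivity) (by positivity)]
      nlinarith [Real.pi_pos]
    have hy53 : y ≤ 0.53 := by linarith
    have ha53 : a ≤ 0.53 := le_trans hylb hy53
    have hsin : y - y^3/4 < Real.sin y := by linarith [Real.sin_gt_sub_cube hy0, pow_pos hy0 3]
    have hmono : a - a^3/4 ≤ y - y^3/4 := by
      have hfac : 0 ≤ (y - a) * (4 - (y^2 + a*y + a^2)) := by
        refine mul_nonneg (by linarith) ?_
        nlinarith [mul_nonneg ha.le ha.le, mul_nonneg hy0.le hy0.le,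
          mul_nonneg ha.le hy0.le]
      nlinarith [hfac]
    have hval : 1/N ≤ a - a^3/4 := by
      have hNne : N ≠ 0 := ne_of_gt hN0
      have h1 : a - a^3/4 - 1/N = (Real.pi/3 - 1 - Real.pi^3/(108*N^2))/N := by
        rw [ha_def]; field_simp; ring
      have hcube : Real.pi^3 ≤ 31.26 := by
        nlinarith [Real.pi_pos, hpi2, sq_nonneg (Real.pi - 3.15), sq_nonneg Real.pi]
      have h3' : Real.pi^3/(108*N^2) ≤ 31.26/972 := by
        refine div_le_div₀ (by norm_num) hcube (by norm_num) (by nlinarith)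
      have h2 : 0 ≤ Real.pi/3 - 1 - Real.pi^3/(108*N^2) := by
        have : (31.26:ℝ)/972 ≤ 0.033 := by norm_num
        linarith
      have h5 : 0 ≤ a - a^3/4 - 1/N := by
        rw [h1]; exact div_nonneg h2 hN0.le
      linarith
    have hNy : 1/N ≤ Real.sin y := by linarith
    have hmem1 : 1/N ∈ Set.Icc (-1:ℝ) 1 := by
      constructor
      · have : (0:ℝ) ≤ 1/N := by positivity
        linarith
      · rw [div_le_one hN0]; linarith
    have hmem2 : y ∈ Set.Icc (-(Real.pi/2)) (Real.pi/2) := by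
      constructor
      · linarith [Real.pi_pos]
      · linarith [Real.pi_pos]
    exact (Real.arcsin_le_iff_le_sin hmem1 hmem2).mpr hNy
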